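/- Let p > 3/2, and let w(x) = x_n^{1/2} for x_n > 0 and w(x) = 1 for x_n < 0. Then w ∈ A^p_{Δ_N}(ℝ^n), yet w does not satisfy the doubling condition: there is no constant C₀ such that w(2Q) ≤ C₀ w(Q) for every cube Q ⊂ ℝ^n. Indeed, for b ∈ (0, 1/9) and Q_b = [−5b/16, 5b/16]^{n−1} × [b/16, 11b/16] one has 2Q_b = [−5b/8, 5b/8]^{n−1} × [−b/4, b], w(Q_b) ≍ b^{n+1/2} and w(2Q_b) ≍ b^n, so w(2Q_b)/w(Q_b) → ∞ as b → 0. In particular A^p_{Δ_N}(ℝ^n) contains non-doubling weights. -/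

import Mathlib

open MeasureTheory Real Set Filter Function
open scoped ENNReal NNReal Topology

noncomputable section

namespace Paper

abbrev Rn (n : ℕ) := Fin n → ℝ

variable {n : ℕ}

/-- The Euclidean norm on `Rn n`. -/
def eNorm (x : Rn n) : ℝ := Real.sqrt (∑ i, (x i) ^ 2)

/-- The last coordinate `x_n` of a point. -/
def lastC (x : Rn n) : ℝ := if h : 0 < n then x ⟨n - 1, by omega⟩ else 0

/-- The reflection `x̃ = (x', -x_n)` in the last coordinate. -/
def reflPt (x : Rn n) : Rn n := fun i => if (i : ℕ) = n - 1 then -(x i) else x i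

/-- The upper half space `ℝ^n_+`. -/
def upperH (n : ℕ) : Set (Rn n) := {x | 0 < lastC x}

/-- The lower half space `ℝ^n_-`. -/
def lowerH (n : ℕ) : Set (Rn n) := {x | lastC x < 0}

/-- The Heaviside function. -/
def hside (s : ℝ) : ℝ := if 0 ≤ s then 1 else 0

/-- `f_{+,e}` : the even extension of the restriction of `f` to the upper half space. -/
def evenExtP (f : Rn n → ℝ) : Rn n → ℝ := fun x => if 0 ≤ lastC x then f x else f (reflPt x)

/-- `f_{-,e}` : the even extension of the restriction of `f` to the lower half space. -/
def evenExtM (f : Rn n → ℝ) : Rn n → ℝ := fun x => if lastC x ≤ 0 then f x else f (reflPt x)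

/-- `f_o` : the odd extension of the restriction of `f` to the upper half space. -/
def oddExtP (f : Rn n → ℝ) : Rn n → ℝ := fun x => if 0 ≤ lastC x then f x else -(f (reflPt x))

/-- The closed axis-parallel cube with corner `a` and side length `ℓ`. -/
def cube (a : Rn n) (ℓ : ℝ) : Set (Rn n) := {x | ∀ i, a i ≤ x i ∧ x i ≤ a i + ℓ}

/-- The closed axis-parallel cube with center `c` and side length `ℓ`. -/
def cubeC (c : Rn n) (ℓ : ℝ) : Set (Rn n) := {x | ∀ i, |x i - c i| ≤ ℓ / 2}

/-- The dyadic cube of generation `j` indexed by `k ∈ ℤ^n`, of side length `2^{-j}`. -/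
def dyadic (j : ℤ) (k : Fin n → ℤ) : Set (Rn n) :=
  {x | ∀ i, (k i : ℝ) * (2 : ℝ) ^ (-j) ≤ x i ∧ x i < ((k i : ℝ) + 1) * (2 : ℝ) ^ (-j)}

/-- The side length `2^{-j}` of a dyadic cube of generation `j`. -/
def sideD (j : ℤ) : ℝ := (2 : ℝ) ^ (-j)

/-- The doubled (concentric) dyadic cube `2Q` of `Q = dyadic j k`. -/
def dyadic2 (j : ℤ) (k : Fin n → ℤ) : Set (Rn n) :=
  {x | ∀ i, |x i - ((k i : ℝ) + 1 / 2) * sideD j| ≤ sideD j}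

/-- The average `⟨f⟩_Q` of `f` over a set `Q`. -/
def avg (f : Rn n → ℝ) (Q : Set (Rn n)) : ℝ := (volume Q).toReal⁻¹ * ∫ x in Q, f x

/-- `w(Q) = ∫_Q w`, as an extended nonnegative real. -/
def wInt (w : Rn n → ℝ) (Q : Set (Rn n)) : ℝ≥0∞ := ∫⁻ x in Q, ENNReal.ofReal (w x)

/-- The measure `w(x) dx`. -/
def wMeasure (w : Rn n → ℝ) : Measure (Rn n) := volume.withDensity fun x => ENNReal.ofReal (w x)

/-- The `A^p` quotient `⟨w⟩_Q ⟨w^{-1/(p-1)}⟩_Q^{p-1}` of a weight over a cube. -/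
def apQuot (p : ℝ) (w : Rn n → ℝ) (Q : Set (Rn n)) : ℝ :=
  avg w Q * (avg (fun x => w x ^ (-(1 / (p - 1)))) Q) ^ (p - 1)

/-- The `A^p` characteristic of `w` relative to cubes contained in `S`. -/
def apConstOn (S : Set (Rn n)) (p : ℝ) (w : Rn n → ℝ) : ℝ≥0∞ :=
  ⨆ (a : Rn n) (ℓ : ℝ) (_ : 0 < ℓ ∧ cube a ℓ ⊆ S), ENNReal.ofReal (apQuot p w (cube a ℓ))

/-- The Muckenhoupt `A^p` characteristic `[w]_{A^p}`. -/
def apConst (p : ℝ) (w : Rn n → ℝ) : ℝ≥0∞ := apConstOn univ p w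

/-- Muckenhoupt `A^p` weights relative to cubes contained in `S` (e.g. `A^p(ℝ^n_+)`). -/
def IsApOn (S : Set (Rn n)) (p : ℝ) (w : Rn n → ℝ) : Prop :=
  (∀ x, 0 ≤ w x) ∧ LocallyIntegrableOn w S volume ∧ apConstOn S p w < ⊤

/-- Muckenhoupt `A^p(ℝ^n)` weights. -/
def IsAp (p : ℝ) (w : Rn n → ℝ) : Prop :=
  (∀ x, 0 ≤ w x) ∧ LocallyIntegrable w volume ∧ apConst p w < ⊤

/-- The weight class `A^p_{Δ_N}(ℝ^n)` associated with the reflection Neumann Laplacian. -/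
def IsApDeltaN (p : ℝ) (w : Rn n → ℝ) : Prop := IsAp p (evenExtP w) ∧ IsAp p (evenExtM w)

/-- The characteristic `[w]_{A^p_{Δ_N}} = [w_{+,e}]_{A^p} + [w_{-,e}]_{A^p}`. -/
def apDeltaNConst (p : ℝ) (w : Rn n → ℝ) : ℝ≥0∞ :=
  apConst p (evenExtP w) + apConst p (evenExtM w)

/-- The Bloom weight `ν = μ^{1/p} λ^{-1/p}`. -/
def bloomW (p : ℝ) (μ lam : Rn n → ℝ) : Rn n → ℝ :=
  fun x => μ x ^ (1 / p) * lam x ^ (-(1 / p))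

/-- The weighted BMO norm `‖f‖_{BMO_w}`, with cubes restricted to lie in `S`. -/
def bmoNormOn (S : Set (Rn n)) (w f : Rn n → ℝ) : ℝ≥0∞ :=
  ⨆ (a : Rn n) (ℓ : ℝ) (_ : 0 < ℓ ∧ cube a ℓ ⊆ S),
    (∫⁻ x in cube a ℓ, ENNReal.ofReal |f x - avg f (cube a ℓ)|) / wInt w (cube a ℓ)

/-- The Muckenhoupt–Wheeden weighted BMO norm `‖f‖_{BMO_w(ℝ^n)}`. -/
def bmoNorm (w f : Rn n → ℝ) : ℝ≥0∞ := bmoNormOn univ w f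

/-- The norm `‖f‖_{BMO_{w,r}}` appearing in the weighted John–Nirenberg inequality. -/
def bmoNormR (w : Rn n → ℝ) (r : ℝ) (f : Rn n → ℝ) : ℝ≥0∞ :=
  ⨆ (a : Rn n) (ℓ : ℝ) (_ : 0 < ℓ),
    ((∫⁻ x in cube a ℓ,
        ENNReal.ofReal (|f x - avg f (cube a ℓ)| ^ r * w x ^ (1 - r))) /
      wInt w (cube a ℓ)) ^ (1 / r)

/-- The Gauss–Weierstrass heat kernel of the Laplacian on `ℝ^n`. -/
def heatK (n : ℕ) (t : ℝ) (x y : Rn n) : ℝ :=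
  (4 * π * t) ^ (-(n : ℝ) / 2) * Real.exp (-(eNorm (x - y)) ^ 2 / (4 * t))

/-- The heat kernel of the reflection Neumann Laplacian `Δ_N` on `ℝ^n`. -/
def heatKN (n : ℕ) (t : ℝ) (x y : Rn n) : ℝ :=
  (heatK n t x y + heatK n t x (reflPt y)) * hside (lastC x * lastC y)

/-- The heat kernel of the Neumann Laplacian on a half space (`x, y` in the same half space). -/
def heatKNhalf (n : ℕ) (t : ℝ) (x y : Rn n) : ℝ :=
  heatK n t x y + heatK n t x (reflPt y)

/-- The heat kernel of the Dirichlet Laplacian on the upper half space. -/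
def heatKD (n : ℕ) (t : ℝ) (x y : Rn n) : ℝ :=
  heatK n t x y - heatK n t x (reflPt y)

/-- The kernel of `t²L e^{-t²L} = -t² (d/ds) e^{-sL}|_{s=t²}` for a semigroup with kernels `K s`. -/
def qKer (K : ℝ → Rn n → Rn n → ℝ) (t : ℝ) (x y : Rn n) : ℝ :=
  -(t ^ 2) * deriv (fun s => K s x y) (t ^ 2)

/-- The operator `t²L e^{-t²L}` applied to `f`, integrating over `S`. -/
def qOpOn (S : Set (Rn n)) (K : ℝ → Rn n → Rn n → ℝ) (f : Rn n → ℝ) (t : ℝ) (x : Rn n) : ℝ :=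
  ∫ y in S, qKer K t x y * f y

/-- The operator `t²L e^{-t²L}` applied to `f` on all of `ℝ^n`. -/
def qOp (K : ℝ → Rn n → Rn n → ℝ) (f : Rn n → ℝ) (t : ℝ) (x : Rn n) : ℝ :=
  qOpOn univ K f t x

/-- `∬_{Q̂} |T_t(y)|² (t^n / w(Q)) dy dt/t` over the Carleson box `Q̂` of the dyadic cube
`Q = dyadic j k`. -/
def boxInt (T : ℝ → Rn n → ℝ) (w : Rn n → ℝ) (j : ℤ) (k : Fin n → ℤ) : ℝ≥0∞ :=
  (∫⁻ t in Ioc (sideD j / 2) (sideD j),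
      (∫⁻ y in dyadic j k, ENNReal.ofReal ((T t y) ^ 2)) * ENNReal.ofReal (t ^ n / t)) /
    wInt w (dyadic j k)

/-- `Σ_{dyadic Q ⊆ P} ∬_{Q̂} |T_t(y)|² (t^n / w(Q)) dy dt/t`. -/
def carlesonSum (T : ℝ → Rn n → ℝ) (w : Rn n → ℝ) (P : Set (Rn n)) : ℝ≥0∞ :=
  ∑' q : ℤ × (Fin n → ℤ),
    {q : ℤ × (Fin n → ℤ) | dyadic q.1 q.2 ⊆ P}.indicator
      (fun q => boxInt T w q.1 q.2) q

/-- The Carleson-measure-type weighted BMO norm built from the family `T_t = t²L e^{-t²L} f`,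
with the supremum taken over all cubes `P ⊆ S`. -/
def bmoCarlesonOn (S : Set (Rn n)) (w : Rn n → ℝ) (T : ℝ → Rn n → ℝ) : ℝ≥0∞ :=
  ⨆ (a : Rn n) (ℓ : ℝ) (_ : 0 < ℓ ∧ cube a ℓ ⊆ S),
    (carlesonSum T w (cube a ℓ) / wInt w (cube a ℓ)) ^ (1 / 2 : ℝ)

/-- The cone `Γ(x)` of aperture 1 over `x`. -/
def coneD (x : Rn n) (t : ℝ) : Set (Rn n) := {y | eNorm (x - y) < t}

/-- The cone `Γ_{Δ_N}(x) = {(y,t) : |x-y| < t, H(x_n y_n) = 1}`. -/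
def coneN (x : Rn n) (t : ℝ) : Set (Rn n) := {y | eNorm (x - y) < t ∧ 0 ≤ lastC x * lastC y}

/-- The generic Littlewood–Paley area function `( ∬_{cone x} |T_t(y)|² dy dt/t^{n+1} )^{1/2}`. -/
def sArea (n : ℕ) (T : ℝ → Rn n → ℝ) (cone : Rn n → ℝ → Set (Rn n)) (x : Rn n) : ℝ≥0∞ :=
  (∫⁻ t in Ioi (0 : ℝ),
      (∫⁻ y in cone x t, ENNReal.ofReal ((T t y) ^ 2)) / ENNReal.ofReal (t ^ (n + 1))) ^
    (1 / 2 : ℝ)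

/-- The area function `S_Δ(f)` associated with the Laplacian. -/
def sDelta (f : Rn n → ℝ) (x : Rn n) : ℝ≥0∞ := sArea n (qOp (heatK n) f) coneD x

/-- The area function `S_{Δ_N}(f)` associated with the reflection Neumann Laplacian. -/
def sDeltaN (f : Rn n → ℝ) (x : Rn n) : ℝ≥0∞ := sArea n (qOp (heatKN n) f) coneN x

/-- The norm of `H^1_{Δ,w}(ℝ^n)`: `‖S_Δ f‖_{L^1_w}`. -/
def h1DeltaNorm (w f : Rn n → ℝ) : ℝ≥0∞ := ∫⁻ x, sDelta f x ∂(wMeasure w)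

/-- The norm of `H^1_{Δ_N,w}(ℝ^n)`: `‖S_{Δ_N} f‖_{L^1_w}`. -/
def h1DeltaNNorm (w f : Rn n → ℝ) : ℝ≥0∞ := ∫⁻ x, sDeltaN f x ∂(wMeasure w)

/-- The dimensional constant `C_n = Γ((n+1)/2) / π^{(n+1)/2}` of the Riesz kernels. -/
def Cdim (n : ℕ) : ℝ := Real.Gamma (((n : ℝ) + 1) / 2) / π ^ (((n : ℝ) + 1) / 2)

/-- The kernel of the `i`-th Riesz transform of the reflection Neumann Laplacian `Δ_N`. -/
def rieszNKer (i : Fin n) (x y : Rn n) : ℝ :=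
  (-Cdim n * ((x i - y i) / eNorm (x - y) ^ (n + 1) +
      (x i - reflPt y i) / eNorm (x - reflPt y) ^ (n + 1))) * hside (lastC x * lastC y)

/-- The kernel of the `i`-th Riesz transform of the Neumann Laplacian on a half space. -/
def rieszNhalfKer (i : Fin n) (x y : Rn n) : ℝ :=
  -Cdim n * ((x i - y i) / eNorm (x - y) ^ (n + 1) +
      (x i - reflPt y i) / eNorm (x - reflPt y) ^ (n + 1))

/-- The kernel of the `i`-th Riesz transform of the Dirichlet Laplacian on the upper half space. -/
def rieszDKer (i : Fin n) (x y : Rn n) : ℝ :=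
  -Cdim n * ((x i - y i) / eNorm (x - y) ^ (n + 1) -
      (x i - reflPt y i) / eNorm (x - reflPt y) ^ (n + 1))

/-- Principal value singular integral operator with kernel `K`, integrating over `S`. -/
def pvOpOn (S : Set (Rn n)) (K : Rn n → Rn n → ℝ) (f : Rn n → ℝ) (x : Rn n) : ℝ :=
  limUnder (𝓝[>] (0 : ℝ)) fun ε => ∫ y in {y ∈ S | ε < eNorm (x - y)}, K x y * f y

/-- The `i`-th Riesz transform `R_{N,i} = ∂_i Δ_N^{-1/2}` of the reflection Neumann Laplacian. -/
def rieszN (i : Fin n) (f : Rn n → ℝ) : Rn n → ℝ := pvOpOn univ (rieszNKer i) f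

/-- The `i`-th Riesz transform `R_{N_+,i}` of the Neumann Laplacian on the upper half space. -/
def rieszNhalf (i : Fin n) (f : Rn n → ℝ) : Rn n → ℝ := pvOpOn (upperH n) (rieszNhalfKer i) f

/-- The `i`-th Riesz transform `R_{D,i}` of the Dirichlet Laplacian on the upper half space. -/
def rieszD (i : Fin n) (f : Rn n → ℝ) : Rn n → ℝ := pvOpOn (upperH n) (rieszDKer i) f

/-- The commutator `[b, T] f = b · Tf - T(bf)`. -/
def commOp (T : (Rn n → ℝ) → Rn n → ℝ) (b f : Rn n → ℝ) : Rn n → ℝ :=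
  fun x => b x * T f x - T (fun y => b y * f y) x

/-- The operator norm of `T : L^p(μm) → L^p(νm)`. -/
def opNorm (T : (Rn n → ℝ) → Rn n → ℝ) (p : ℝ) (μm νm : Measure (Rn n)) : ℝ≥0∞ :=
  ⨆ f : Rn n → ℝ,
    eLpNorm (T f) (ENNReal.ofReal p) νm / eLpNorm f (ENNReal.ofReal p) μm

/-- The class `𝓜` of locally integrable functions with
`∫ |f(x)|²/(1+|x|^{n+ε}) dx < ∞` for some `ε > 0`. -/
def MemM (f : Rn n → ℝ) : Prop :=
  LocallyIntegrable f volume ∧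
    ∃ ε : ℝ, 0 < ε ∧
      ∫⁻ x, ENNReal.ofReal ((f x) ^ 2 / (1 + eNorm x ^ ((n : ℝ) + ε))) < ⊤

/-- The rescaled wavelet `2^{jn/2} ψ(2^j x - γ)` associated to the dyadic cube `(j, γ)`. -/
def wletR (ψ : Rn n → ℝ) (j : ℤ) (γ : Fin n → ℤ) : Rn n → ℝ :=
  fun x => (2 : ℝ) ^ ((j : ℝ) * n / 2) * ψ (fun i => (2 : ℝ) ^ j * x i - (γ i : ℝ))

/-- A (Daubechies-type) wavelet system of order `m` on `ℝ^n`. -/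
structure WaveletSystem (n m : ℕ) where
  ψ : Fin (2 ^ n - 1) → Rn n → ℝ
  φ : Rn n → ℝ
  ψ_smooth : ∀ ε, ContDiff ℝ 1 (ψ ε)
  ψ_support : ∀ ε, HasCompactSupport (ψ ε)
  orthonormal : ∀ ε j γ ε' j' γ',
    ∫ x, wletR (ψ ε) j γ x * wletR (ψ ε') j' γ' x =
      if ε = ε' ∧ j = j' ∧ γ = γ' then 1 else 0
  complete : ∀ f : Rn n → ℝ, MemLp f 2 volume →
    (∀ ε j γ, ∫ x, f x * wletR (ψ ε) j γ x = 0) → f =ᵐ[volume] 0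
  cancel : ∀ ε (k : Fin n → ℕ), (∑ i, k i) ≤ m →
    ∫ x, ψ ε x * ∏ i, x i ^ k i = 0
  φ_cont : Continuous φ
  φ_support : HasCompactSupport φ
  φ_int : (∫ x, φ x) ≠ 0
  ψ_comb : ∀ ε, ∃ (s : Finset (Fin n → ℤ)) (c : (Fin n → ℤ) → ℝ),
    ψ ε = fun x => ∑ γ ∈ s, c γ * φ (fun i => x i - (γ i : ℝ))

/-- The wavelet coefficient `⟨f, ψ_Q^ε⟩`. -/
def wcoef {m : ℕ} (W : WaveletSystem n m) (ε : Fin (2 ^ n - 1)) (j : ℤ) (γ : Fin n → ℤ)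
    (f : Rn n → ℝ) : ℝ :=
  ∫ x, f x * wletR (W.ψ ε) j γ x

/-- The square of the wavelet square function `S_ψ(f)(x)²`. -/
def sWaveSq {m : ℕ} (W : WaveletSystem n m) (f : Rn n → ℝ) (x : Rn n) : ℝ≥0∞ :=
  ∑' q : Fin (2 ^ n - 1) × ℤ × (Fin n → ℤ),
    (dyadic2 q.2.1 q.2.2).indicator
      (fun _ => ENNReal.ofReal ((wcoef W q.1 q.2.1 q.2.2 f) ^ 2) /
        ENNReal.ofReal (sideD q.2.1 ^ n)) x

/-- The norm of the weighted wavelet Hardy space `H^1_{w,wavelet}`: `‖S_ψ f‖_{L^1_w}`. -/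
def h1WaveNorm {m : ℕ} (W : WaveletSystem n m) (w f : Rn n → ℝ) : ℝ≥0∞ :=
  ∫⁻ x, (sWaveSq W f x) ^ (1 / 2 : ℝ) ∂(wMeasure w)

/-- The weighted Carleson measure norm `‖f‖_{CM_w}`. -/
def cmNorm {m : ℕ} (W : WaveletSystem n m) (w f : Rn n → ℝ) : ℝ≥0∞ :=
  ⨆ (J : ℤ) (Γ : Fin n → ℤ),
    ((∑' q : Fin (2 ^ n - 1) × ℤ × (Fin n → ℤ),
        {q : Fin (2 ^ n - 1) × ℤ × (Fin n → ℤ) | dyadic q.2.1 q.2.2 ⊆ dyadic J Γ}.indicator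
          (fun q => ENNReal.ofReal ((wcoef W q.1 q.2.1 q.2.2 f) ^ 2) *
            ENNReal.ofReal (sideD q.2.1 ^ n) / wInt w (dyadic q.2.1 q.2.2)) q) /
      wInt w (dyadic J Γ)) ^ (1 / 2 : ℝ)

/-- The wavelet pairing `Σ_Q Σ_ε ⟨f, ψ_Q^ε⟩ ⟨b, ψ_Q^ε⟩`. -/
def wPair {m : ℕ} (W : WaveletSystem n m) (f b : Rn n → ℝ) : ℝ :=
  ∑' q : Fin (2 ^ n - 1) × ℤ × (Fin n → ℤ),
    wcoef W q.1 q.2.1 q.2.2 f * wcoef W q.1 q.2.1 q.2.2 b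

/-- The Fourier transform `φ̂(ξ) = ∫ e^{-2πi x·ξ} φ(x) dx`. -/
def fourierT (φ : Rn n → ℝ) (ξ : Rn n) : ℂ :=
  ∫ x, Complex.exp (-2 * π * Complex.I * (∑ i, x i * ξ i)) * (φ x : ℂ)

/-- The class `𝓡^β` of Schwartz functions with vanishing moments up to order `β` and
nondegenerate Fourier transform. -/
structure RClass (n β : ℕ) where
  φ : SchwartzMap (Rn n) ℝ
  cancel : ∀ k : Fin n → ℕ, (∑ i, k i) ≤ β → ∫ x, φ x * ∏ i, x i ^ k i = 0
  nondeg : ∃ C : ℝ, C ≠ 0 ∧ ∀ ξ : Rn n, ξ ≠ 0 →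
    ∫ t in Ioi (0 : ℝ), ‖fourierT (⇑φ) (t • ξ)‖ ^ 2 / t = C

/-- The dilated convolution `φ_t * f (x)` with `φ_t(x) = t^{-n} φ(x/t)`. -/
def convDil (φ : Rn n → ℝ) (t : ℝ) (f : Rn n → ℝ) (x : Rn n) : ℝ :=
  ∫ y, (1 / t ^ n) * φ (t⁻¹ • (x - y)) * f y

/-- The Littlewood–Paley area function `S_{φ,β}(f)`. -/
def sAreaPhi (φ : Rn n → ℝ) (f : Rn n → ℝ) (x : Rn n) : ℝ≥0∞ :=
  sArea n (fun t y => convDil φ t f y) coneD x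

/-- The norm of `H^1_{w,φ,β}`: `‖S_{φ,β} f‖_{L^1_w}`. -/
def h1AreaNorm (φ : Rn n → ℝ) (w f : Rn n → ℝ) : ℝ≥0∞ :=
  ∫⁻ x, sAreaPhi φ f x ∂(wMeasure w)

/-- A `(1,p,β)`-atom for the weighted atomic Hardy space. -/
def IsAtom (p : ℝ) (β : ℕ) (w : Rn n → ℝ) (a : Rn n → ℝ) : Prop :=
  ∃ (c : Rn n) (ℓ : ℝ), 0 < ℓ ∧ support a ⊆ cube c ℓ ∧
    (∀ k : Fin n → ℕ, (∑ i, k i) ≤ β → ∫ x, a x * ∏ i, x i ^ k i = 0) ∧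
    eLpNorm a (ENNReal.ofReal p) (wMeasure w) ≤ (wInt w (cube c ℓ)) ^ (1 / p - 1)

/-- The atomic norm of the weighted Hardy space `H^{1,p,β}_w(ℝ^n)`. -/
def atomicNorm (p : ℝ) (β : ℕ) (w f : Rn n → ℝ) : ℝ≥0∞ :=
  sInf {s : ℝ≥0∞ | ∃ (c : ℕ → ℝ) (a : ℕ → Rn n → ℝ),
    (∀ j, IsAtom p β w (a j)) ∧
    (∀ᵐ x ∂volume, HasSum (fun j => c j * a j x) (f x)) ∧
    s = ∑' j, ENNReal.ofReal |c j|}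


/-- The weight `w(x) = x_n^{1/2}` for `x_n > 0`, `w(x) = 1` for `x_n < 0`. -/
def wHalf (n : ℕ) : Rn n → ℝ :=
  fun x => if 0 < lastC x then lastC x ^ (1 / 2 : ℝ) else 1

/-- The center `(0, …, 0, 3b/8)` of the cube `Q_b = [-5b/16, 5b/16]^{n-1} × [b/16, 11b/16]`. -/
def ctrQb (n : ℕ) (b : ℝ) : Rn n := fun i => if (i : ℕ) = n - 1 then 3 * b / 8 else 0

/- ======================= Auxiliary lemmas ======================= -/

section AuxNondoubling

variable {n : ℕ}

lemma lastC_eq (hn : 0 < n) (x : Rn n) : lastC x = x ⟨n - 1, by omega⟩ := by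
  simp [lastC, hn]

lemma reflPt_lastC (hn : 0 < n) (x : Rn n) : lastC (reflPt x) = -(lastC x) := by
  rw [lastC_eq hn, lastC_eq hn]
  simp [reflPt]

lemma wHalf_nonneg (x : Rn n) : 0 ≤ wHalf n x := by
  unfold wHalf
  split
  · exact Real.rpow_nonneg (le_of_lt ‹_›) _
  · norm_num

lemma evenExtM_wHalf (hn : 0 < n) : evenExtM (wHalf n) = fun _ => (1 : ℝ) := by
  funext x
  unfold evenExtM wHalf
  by_cases h : lastC x ≤ 0
  · rw [if_pos h, if_neg (by linarith)]
  · rw [if_neg h, if_neg (by rw [reflPt_lastC hn]; push_neg at h; linarith)]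

lemma evenExtP_wHalf (hn : 0 < n) (x : Rn n) :
    evenExtP (wHalf n) x =
      if x ⟨n - 1, by omega⟩ = 0 then 1 else |x ⟨n - 1, by omega⟩| ^ (1 / 2 : ℝ) := by
  have hl : lastC x = x ⟨n - 1, by omega⟩ := lastC_eq hn x
  unfold evenExtP wHalf
  rcases lt_trichotomy (x ⟨n - 1, by omega⟩) 0 with h | h | h
  · rw [if_neg (by rw [hl]; push_neg; linarith),
      if_pos (by rw [reflPt_lastC hn, hl]; linarith),
      if_neg (by exact ne_of_lt h), reflPt_lastC hn, hl, abs_of_neg h]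
  · rw [if_pos (by rw [hl, h]), if_neg (by rw [hl, h]; exact lt_irrefl 0), if_pos h]
  · rw [if_pos (by rw [hl]; linarith), if_pos (by rw [hl]; exact h),
      if_neg (by exact ne_of_gt h), hl, abs_of_pos h]

lemma cube_eq_pi (a : Rn n) (ℓ : ℝ) :
    cube a ℓ = Set.pi univ fun i => Icc (a i) (a i + ℓ) := by
  ext x
  simp [cube, Set.mem_pi, Pi.le_def, forall_and]

lemma measurableSet_cube (a : Rn n) (ℓ : ℝ) : MeasurableSet (cube a ℓ) := by
  rw [cube_eq_pi]
  exact MeasurableSet.univ_pi fun i => measurableSet_Icc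

lemma volume_cube (a : Rn n) {ℓ : ℝ} (hℓ : 0 ≤ ℓ) :
    volume (cube a ℓ) = ENNReal.ofReal ℓ ^ n := by
  rw [cube_eq_pi, volume_pi_pi]
  simp [Real.volume_Icc]

lemma cubeC_eq_pi (c : Rn n) (ℓ : ℝ) :
    cubeC c ℓ = Set.pi univ fun i => Icc (c i - ℓ / 2) (c i + ℓ / 2) := by
  ext x
  simp only [cubeC, mem_setOf_eq, Set.mem_pi, mem_univ, true_implies, mem_Icc, abs_le]
  exact forall_congr' fun i => by constructor <;> rintro ⟨h1, h2⟩ <;> constructor <;> linarith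

lemma volume_cubeC (c : Rn n) {ℓ : ℝ} (hℓ : 0 ≤ ℓ) :
    volume (cubeC c ℓ) = ENNReal.ofReal ℓ ^ n := by
  rw [cubeC_eq_pi, volume_pi_pi]
  have h : ∀ i : Fin n, (c i + ℓ / 2) - (c i - ℓ / 2) = ℓ := fun i => by ring
  simp [Real.volume_Icc, h]

lemma measurableSet_cubeC (c : Rn n) (ℓ : ℝ) : MeasurableSet (cubeC c ℓ) := by
  rw [cubeC_eq_pi]
  exact MeasurableSet.univ_pi fun i => measurableSet_Icc

/-- Fubini reduction: integral over a cube of a function of one coordinate. -/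
lemma integral_cube_eval (a : Rn n) {ℓ : ℝ} (hℓ : 0 ≤ ℓ) (i0 : Fin n) (h : ℝ → ℝ) :
    ∫ x in cube a ℓ, h (x i0) = (∫ t in Icc (a i0) (a i0 + ℓ), h t) * ℓ ^ (n - 1) := by
  classical
  rw [← MeasureTheory.integral_indicator (measurableSet_cube a ℓ)]
  have hfac : (cube a ℓ).indicator (fun x => h (x i0)) = fun x : Rn n =>
      ∏ i, ((Icc (a i) (a i + ℓ)).indicator (fun t => if i = i0 then h t else 1)) (x i) := by
    funext x
    by_cases hx : x ∈ cube a ℓ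
    · rw [Set.indicator_of_mem hx]
      have hmem : ∀ i : Fin n, x i ∈ Icc (a i) (a i + ℓ) := fun i => ⟨(hx i).1, (hx i).2⟩
      have heq : ∀ i : Fin n,
          ((Icc (a i) (a i + ℓ)).indicator (fun t => if i = i0 then h t else 1)) (x i)
            = if i = i0 then h (x i) else 1 := fun i => Set.indicator_of_mem (hmem i) _
      rw [Finset.prod_congr rfl fun i _ => heq i, Finset.prod_ite_eq' Finset.univ i0
        (fun i => h (x i)), if_pos (Finset.mem_univ i0)]
    · rw [Set.indicator_of_notMem hx]
      obtain ⟨i, hi⟩ : ∃ i, x i ∉ Icc (a i) (a i + ℓ) := by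
        by_contra hcon
        push_neg at hcon
        exact hx fun i => ⟨(hcon i).1, (hcon i).2⟩
      exact (Finset.prod_eq_zero (Finset.mem_univ i)
        (by rw [Set.indicator_of_notMem hi])).symm
  rw [hfac, MeasureTheory.integral_fintype_prod_volume_eq_prod (𝕜 := ℝ)
    (fun i => ((Icc (a i) (a i + ℓ)).indicator (fun t => if i = i0 then h t else 1)))]
  have hval : ∀ i : Fin n,
      (∫ t, ((Icc (a i) (a i + ℓ)).indicator (fun t => if i = i0 then h t else 1)) t)
        = if i = i0 then ∫ t in Icc (a i0) (a i0 + ℓ), h t else ℓ := by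
    intro i
    rw [MeasureTheory.integral_indicator measurableSet_Icc]
    by_cases hi : i = i0
    · subst hi
      simp
    · rw [if_neg hi]
      simp only [if_neg hi]
      rw [MeasureTheory.setIntegral_const, measureReal_def, Real.volume_Icc, smul_eq_mul, mul_one,
        show a i + ℓ - a i = ℓ by ring, ENNReal.toReal_ofReal hℓ]
  rw [Finset.prod_congr rfl fun i _ => hval i,
    ← Finset.mul_prod_erase Finset.univ _ (Finset.mem_univ i0), if_pos rfl]
  congr 1
  rw [Finset.prod_congr rfl (fun i hi => if_neg (Finset.ne_of_mem_erase hi)),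
    Finset.prod_const, Finset.card_erase_of_mem (Finset.mem_univ i0), Finset.card_univ,
    Fintype.card_fin]

lemma intervalIntegrable_abs_rpow {α : ℝ} (hα : -1 < α) {R : ℝ} (hR : 0 ≤ R) :
    IntervalIntegrable (fun t : ℝ => |t| ^ α) volume 0 R := by
  rw [intervalIntegrable_iff_integrableOn_Ioc_of_le hR]
  have h1 : IntegrableOn (fun t : ℝ => t ^ α) (Ioc 0 R) volume := by
    have h := intervalIntegral.intervalIntegrable_rpow' (a := 0) (b := R) hα
    rwa [intervalIntegrable_iff_integrableOn_Ioc_of_le hR] at h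
  exact h1.congr_fun (fun t ht => by rw [abs_of_pos ht.1]) measurableSet_Ioc

lemma intervalIntegrable_abs_rpow' {α : ℝ} (hα : -1 < α) {R : ℝ} (hR : 0 ≤ R) :
    IntervalIntegrable (fun t : ℝ => |t| ^ α) volume (-R) R := by
  have J0 := intervalIntegrable_abs_rpow hα hR
  have Jneg : IntervalIntegrable (fun t : ℝ => |t| ^ α) volume (-R) 0 := by
    rw [IntervalIntegrable.iff_comp_neg]
    have : (fun x : ℝ => |(-x)| ^ α) = fun x : ℝ => |x| ^ α := by
      funext x; rw [abs_neg]
    rw [this, neg_neg, neg_zero]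
    exact J0.symm
  exact Jneg.trans J0

lemma integrableOn_abs_rpow {α : ℝ} (hα : -1 < α) (c d : ℝ) :
    IntegrableOn (fun t => |t| ^ α) (Icc c d) volume := by
  set R : ℝ := max |c| |d| with hRdef
  have hR : 0 ≤ R := le_max_of_le_left (abs_nonneg _)
  have h := intervalIntegrable_abs_rpow' hα hR
  rw [intervalIntegrable_iff_integrableOn_Ioc_of_le (by linarith)] at h
  rw [← integrableOn_Icc_iff_integrableOn_Ioc] at h
  refine h.mono_set ?_
  intro t ht
  constructor
  · have h1 : -R ≤ c := by
      have := neg_abs_le c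
      have := le_max_left |c| |d|
      simp only [hRdef]
      linarith
    linarith [ht.1]
  · have h2 : d ≤ R := le_trans (le_abs_self d) (le_max_right _ _)
    linarith [ht.2]

lemma integral_Icc_symm_abs_rpow {α : ℝ} (hα : -1 < α) {R : ℝ} (hR : 0 ≤ R) :
    ∫ t in Icc (-R) R, |t| ^ α = 2 * R ^ (α + 1) / (α + 1) := by
  have hα1 : 0 < α + 1 := by linarith
  have hpos : ∫ t in (0:ℝ)..R, |t| ^ α = R ^ (α + 1) / (α + 1) := by
    have hcongr : ∫ t in (0:ℝ)..R, |t| ^ α = ∫ t in (0:ℝ)..R, t ^ α := by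
      rw [intervalIntegral.integral_of_le hR, intervalIntegral.integral_of_le hR]
      exact MeasureTheory.setIntegral_congr_fun measurableSet_Ioc
        (fun t ht => by rw [abs_of_pos ht.1])
    rw [hcongr, integral_rpow (Or.inl hα), Real.zero_rpow hα1.ne', sub_zero]
  have hneg : ∫ t in (-R:ℝ)..0, |t| ^ α = R ^ (α + 1) / (α + 1) := by
    have := intervalIntegral.integral_comp_neg (a := (0:ℝ)) (b := R)
      (f := fun t : ℝ => |t| ^ α)
    simp only [neg_zero] at this
    rw [← this]
    have hcongr : (fun x : ℝ => |(-x)| ^ α) = fun x : ℝ => |x| ^ α := by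
      funext x; rw [abs_neg]
    simp only [abs_neg]
    exact hpos
  have hsplit : ∫ t in (-R:ℝ)..R, |t| ^ α = 2 * R ^ (α + 1) / (α + 1) := by
    rw [← intervalIntegral.integral_add_adjacent_intervals (a := -R) (b := 0) (c := R)
      ((intervalIntegrable_abs_rpow' hα hR).mono_set (by
        rw [Set.uIcc_of_le (by linarith), Set.uIcc_of_le (by linarith : -R ≤ R)]
        exact Set.Icc_subset_Icc le_rfl hR))
      ((intervalIntegrable_abs_rpow hα hR)),
      hpos, hneg]
    ring
  rw [MeasureTheory.integral_Icc_eq_integral_Ioc,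
    ← intervalIntegral.integral_of_le (by linarith : -R ≤ R), hsplit]

/-- The key uniform one-dimensional estimate for power weights. -/
lemma oneD_bound {α : ℝ} (hα0 : -1 < α) (hα1 : α ≤ 1) {a ℓ : ℝ} (hℓ : 0 < ℓ) :
    ∫ t in Icc a (a + ℓ), |t| ^ α ≤ 18 / (α + 1) * (ℓ * max ℓ (|a| / 2) ^ α) := by
  have hα1' : 0 < α + 1 := by linarith
  rcases le_or_gt (|a|) (2 * ℓ) with hcase | hcase
  · have hs : max ℓ (|a| / 2) = ℓ := max_eq_left (by linarith)
    rw [hs]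
    have habs := abs_le.1 hcase
    have hsub : Icc a (a + ℓ) ⊆ Icc (-(3 * ℓ)) (3 * ℓ) := fun t ht =>
      ⟨by linarith [ht.1], by linarith [ht.2]⟩
    have h3ℓ : (0:ℝ) ≤ 3 * ℓ := by linarith
    calc ∫ t in Icc a (a + ℓ), |t| ^ α
        ≤ ∫ t in Icc (-(3 * ℓ)) (3 * ℓ), |t| ^ α := by
          apply MeasureTheory.setIntegral_mono_set (integrableOn_abs_rpow hα0 _ _)
            (Filter.Eventually.of_forall fun t => Real.rpow_nonneg (abs_nonneg t) α)
            (HasSubset.Subset.eventuallyLE hsub)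
      _ = 2 * (3 * ℓ) ^ (α + 1) / (α + 1) := integral_Icc_symm_abs_rpow hα0 h3ℓ
      _ ≤ 18 / (α + 1) * (ℓ * ℓ ^ α) := by
          have h3 : (3:ℝ) ^ (α + 1) ≤ 9 := by
            have := Real.rpow_le_rpow_of_exponent_le (x := 3) (by norm_num)
              (show α + 1 ≤ (2:ℝ) by linarith)
            rwa [show ((2:ℝ) : ℝ) = ((2:ℕ) : ℝ) by norm_num, Real.rpow_natCast,
              show (3:ℝ) ^ (2:ℕ) = 9 by norm_num] at this
          have hXpos : (0:ℝ) < ℓ ^ α * ℓ := mul_pos (Real.rpow_pos_of_pos hℓ α) hℓ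
          have hfactor : 2 * (3 * ℓ) ^ (α + 1) / (α + 1)
              = 2 * 3 ^ (α + 1) / (α + 1) * (ℓ ^ α * ℓ) := by
            rw [Real.mul_rpow (by norm_num) hℓ.le, Real.rpow_add hℓ, Real.rpow_one]
            ring
          rw [hfactor]
          calc 2 * 3 ^ (α + 1) / (α + 1) * (ℓ ^ α * ℓ)
              ≤ 18 / (α + 1) * (ℓ ^ α * ℓ) := by
                have hnum : 2 * 3 ^ (α + 1) ≤ (18:ℝ) := by nlinarith
                exact mul_le_mul_of_nonneg_right
                  ((div_le_div_iff_of_pos_right hα1').mpr hnum) hXpos.le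
            _ = 18 / (α + 1) * (ℓ * ℓ ^ α) := by ring
  · have hs : max ℓ (|a| / 2) = |a| / 2 := max_eq_right (by linarith)
    rw [hs]
    set s : ℝ := |a| / 2 with hsdef
    have hspos : 0 < s := by simp only [hsdef]; linarith
    have hptwise : ∀ t ∈ Icc a (a + ℓ), |t| ^ α ≤ 4 * s ^ α := by
      intro t ht
      have h1 : s ≤ |t| ∧ |t| ≤ 4 * s := by
        rcases le_or_gt 0 a with ha | ha
        · have hta : |a| = a := abs_of_nonneg ha
          have ht0 : 0 ≤ t := le_trans ha ht.1
          rw [abs_of_nonneg ht0]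
          constructor
          · simp only [hsdef, hta]; linarith [ht.1]
          · simp only [hsdef, hta]; rw [hta] at hcase; linarith [ht.2]
        · have hta : |a| = -a := abs_of_neg ha
          rw [hta] at hcase
          have ht0 : t < 0 := by linarith [ht.2]
          rw [abs_of_neg ht0]
          constructor
          · simp only [hsdef, hta]; linarith [ht.2]
          · simp only [hsdef, hta]; linarith [ht.1]
      rcases le_or_gt 0 α with hαp | hαn
      · calc |t| ^ α ≤ (4 * s) ^ α := Real.rpow_le_rpow (abs_nonneg t) h1.2 hαp
          _ = 4 ^ α * s ^ α := Real.mul_rpow (by norm_num) hspos.le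
          _ ≤ 4 * s ^ α := by
              have h4 : (4:ℝ) ^ α ≤ 4 := by
                have := Real.rpow_le_rpow_of_exponent_le (x := 4) (by norm_num) hα1
                rwa [Real.rpow_one] at this
              exact mul_le_mul_of_nonneg_right h4 (Real.rpow_nonneg hspos.le α)
      · calc |t| ^ α ≤ s ^ α := Real.rpow_le_rpow_of_nonpos hspos h1.1 hαn.le
          _ ≤ 4 * s ^ α := by nlinarith [Real.rpow_pos_of_pos hspos α]
    calc ∫ t in Icc a (a + ℓ), |t| ^ α
        ≤ ∫ _t in Icc a (a + ℓ), 4 * s ^ α := by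
          apply MeasureTheory.setIntegral_mono_on (integrableOn_abs_rpow hα0 _ _)
            (MeasureTheory.integrableOn_const measure_Icc_lt_top.ne)
            measurableSet_Icc hptwise
      _ = ℓ * (4 * s ^ α) := by
          rw [MeasureTheory.setIntegral_const, measureReal_def, Real.volume_Icc,
            show a + ℓ - a = ℓ by ring, smul_eq_mul, ENNReal.toReal_ofReal hℓ.le]
      _ ≤ 18 / (α + 1) * (ℓ * s ^ α) := by
          have h418 : (4:ℝ) ≤ 18 / (α + 1) := by
            rw [le_div_iff₀ hα1']
            linarith
          calc ℓ * (4 * s ^ α) = 4 * (ℓ * s ^ α) := by ring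
            _ ≤ 18 / (α + 1) * (ℓ * s ^ α) :=
                mul_le_mul_of_nonneg_right h418 (by positivity)
    
lemma setIntegral_congr_off_hyperplane (i0 : Fin n) {s : Set (Rn n)} (hs : MeasurableSet s)
    (f g : Rn n → ℝ) (hfg : ∀ x, x i0 ≠ 0 → f x = g x) :
    ∫ x in s, f x = ∫ x in s, g x := by
  apply MeasureTheory.setIntegral_congr_ae hs
  have hae : ∀ᵐ x : Rn n ∂volume, x i0 ≠ 0 := by
    rw [MeasureTheory.volume_pi]
    exact MeasureTheory.Measure.ae_eval_ne _ i0 0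
  filter_upwards [hae] with x hx _
  exact hfg x hx

/-- Uniform bound on the average over a cube of a power of one coordinate. -/
lemma avg_cube_le {α : ℝ} (hα0 : -1 < α) (hα1 : α ≤ 1) (hn : 0 < n) (a : Rn n) {ℓ : ℝ}
    (hℓ : 0 < ℓ) (i0 : Fin n) (w : Rn n → ℝ) (hw : ∀ x, x i0 ≠ 0 → w x = |x i0| ^ α) :
    avg w (cube a ℓ) ≤ 18 / (α + 1) * max ℓ (|a i0| / 2) ^ α := by
  unfold avg
  rw [setIntegral_congr_off_hyperplane i0 (measurableSet_cube a ℓ) w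
    (fun x => |x i0| ^ α) hw, integral_cube_eval a hℓ.le i0 (fun t => |t| ^ α),
    volume_cube a hℓ.le]
  have hV : ((ENNReal.ofReal ℓ ^ n).toReal) = ℓ ^ n := by
    rw [ENNReal.toReal_pow, ENNReal.toReal_ofReal hℓ.le]
  rw [hV]
  have hb := oneD_bound hα0 hα1 (a := a i0) hℓ
  have hn1 : ℓ ^ n = ℓ * ℓ ^ (n - 1) := by
    rw [← pow_succ']
    congr 1
    omega
  have hpow1 : (0:ℝ) < ℓ ^ (n - 1) := pow_pos hℓ _
  have hpown : (0:ℝ) < ℓ ^ n := pow_pos hℓ _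
  calc (ℓ ^ n)⁻¹ * ((∫ t in Icc (a i0) (a i0 + ℓ), |t| ^ α) * ℓ ^ (n - 1))
      ≤ (ℓ ^ n)⁻¹ * ((18 / (α + 1) * (ℓ * max ℓ (|a i0| / 2) ^ α)) * ℓ ^ (n - 1)) := by
        apply mul_le_mul_of_nonneg_left _ (inv_nonneg.2 hpown.le)
        exact mul_le_mul_of_nonneg_right hb hpow1.le
    _ = 18 / (α + 1) * max ℓ (|a i0| / 2) ^ α := by
        have hαne : α + 1 ≠ 0 := by linarith
        have hℓne : ℓ ≠ 0 := hℓ.ne'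
        have hpne : (ℓ:ℝ) ^ (n - 1) ≠ 0 := hpow1.ne'
        rw [hn1]
        field_simp

end AuxNondoubling
section AuxNondoubling2

variable {n : ℕ}

lemma isAp_const_one {p : ℝ} (hp : 3 / 2 < p) : IsAp p (fun _ : Rn n => (1 : ℝ)) := by
  refine ⟨fun _ => zero_le_one, MeasureTheory.locallyIntegrable_const 1, ?_⟩
  have hq : ∀ (a : Rn n) (ℓ : ℝ), 0 < ℓ → apQuot p (fun _ => (1 : ℝ)) (cube a ℓ) ≤ 1 := by
    intro a ℓ hℓ
    unfold apQuot avg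
    simp only [Real.one_rpow]
    rw [MeasureTheory.setIntegral_const, measureReal_def, volume_cube a hℓ.le, smul_eq_mul, mul_one,
      ENNReal.toReal_pow, ENNReal.toReal_ofReal hℓ.le,
      inv_mul_cancel₀ (by positivity : (ℓ : ℝ) ^ n ≠ 0), Real.one_rpow, mul_one]
  unfold apConst apConstOn
  refine lt_of_le_of_lt (iSup_le fun a => iSup_le fun ℓ => iSup_le fun hc => ?_)
    (ENNReal.one_lt_top)
  calc ENNReal.ofReal (apQuot p (fun _ => (1:ℝ)) (cube a ℓ))
      ≤ ENNReal.ofReal 1 := ENNReal.ofReal_le_ofReal (hq a ℓ hc.1)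
    _ = 1 := ENNReal.ofReal_one

lemma isAp_evenExtP (hn : 1 ≤ n) {p : ℝ} (hp : 3 / 2 < p) : IsAp p (evenExtP (wHalf n)) := by
  have hn0 : 0 < n := hn
  set i0 : Fin n := ⟨n - 1, by omega⟩ with hi0
  have hval : ∀ x : Rn n, evenExtP (wHalf n) x
      = if x i0 = 0 then 1 else |x i0| ^ (1 / 2 : ℝ) := fun x => evenExtP_wHalf hn0 x
  have hp1 : (0 : ℝ) < p - 1 := by linarith
  have hnonneg : ∀ x, 0 ≤ evenExtP (wHalf n) x := by
    intro x
    rw [hval x]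
    split
    · norm_num
    · exact Real.rpow_nonneg (abs_nonneg _) _
  have hmeas : Measurable (evenExtP (wHalf n)) := by
    have heq : evenExtP (wHalf n) = fun x => if x i0 = 0 then 1 else |x i0| ^ (1 / 2 : ℝ) :=
      funext hval
    rw [heq]
    apply Measurable.ite
    · exact (measurable_pi_apply i0) (measurableSet_singleton 0)
    · exact measurable_const
    · exact ((Real.continuous_rpow_const (by norm_num)).comp
        continuous_abs).measurable.comp (measurable_pi_apply i0)
  refine ⟨hnonneg, ?_, ?_⟩
  · rw [MeasureTheory.locallyIntegrable_iff]
    intro k hk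
    obtain ⟨R, hR⟩ := hk.isBounded.subset_closedBall 0
    apply MeasureTheory.Measure.integrableOn_of_bounded
      (M := max 1 ((max R 0 + 1) ^ (1 / 2 : ℝ))) hk.measure_lt_top.ne
      hmeas.aestronglyMeasurable
    filter_upwards [MeasureTheory.ae_restrict_mem hk.measurableSet] with x hx
    rw [Real.norm_of_nonneg (hnonneg x), hval x]
    split
    · exact le_max_left _ _
    · refine le_trans ?_ (le_max_right _ _)
      apply Real.rpow_le_rpow (abs_nonneg _) ?_ (by norm_num)
      have h1 : |x i0| ≤ ‖x‖ := by
        have := norm_le_pi_norm x i0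
        rwa [Real.norm_eq_abs] at this
      have h2 : ‖x‖ ≤ R := by
        have := hR hx
        rwa [Metric.mem_closedBall, dist_zero_right] at this
      have h3 : R ≤ max R 0 := le_max_left _ _
      linarith
  · set γ : ℝ := (1 / 2 : ℝ) * (-(1 / (p - 1))) with hγ
    have hinv2 : 1 / (p - 1) < 2 := by
      rw [div_lt_iff₀ hp1]
      linarith
    have hinvpos : 0 < 1 / (p - 1) := by positivity
    have hγ0 : -1 < γ := by rw [hγ]; linarith
    have hγ1 : γ ≤ 1 := by rw [hγ]; linarith
    set K₁ : ℝ := 18 / ((1 / 2 : ℝ) + 1) with hK₁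
    set K₂ : ℝ := 18 / (γ + 1) with hK₂
    have hK₁pos : 0 < K₁ := by rw [hK₁]; norm_num
    have hK₂pos : 0 < K₂ := by
      rw [hK₂]
      exact div_pos (by norm_num) (by linarith)
    set M : ℝ := K₁ * K₂ ^ (p - 1) with hM
    have key : ∀ (a : Rn n) (ℓ : ℝ), 0 < ℓ →
        apQuot p (evenExtP (wHalf n)) (cube a ℓ) ≤ M := by
      intro a ℓ hℓ
      set s : ℝ := max ℓ (|a i0| / 2) with hs
      have hspos : 0 < s := lt_of_lt_of_le hℓ (le_max_left _ _)
      have hA : avg (evenExtP (wHalf n)) (cube a ℓ) ≤ K₁ * s ^ (1 / 2 : ℝ) := by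
        have h := avg_cube_le (α := (1 / 2 : ℝ)) (by norm_num) (by norm_num) hn0 a hℓ i0
          (evenExtP (wHalf n)) (fun x hx => by rw [hval x, if_neg hx])
        rw [hK₁, hs]
        exact h
      have hB : avg (fun x => (evenExtP (wHalf n) x) ^ (-(1 / (p - 1)))) (cube a ℓ)
          ≤ K₂ * s ^ γ := by
        have hfun : ∀ x : Rn n, x i0 ≠ 0 →
            (evenExtP (wHalf n) x) ^ (-(1 / (p - 1))) = |x i0| ^ γ := by
          intro x hx
          rw [hval x, if_neg hx, hγ, Real.rpow_mul (abs_nonneg _)]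
        have h := avg_cube_le hγ0 hγ1 hn0 a hℓ i0 _ hfun
        rw [hK₂, hs]
        exact h
      have hBnn : 0 ≤ avg (fun x => (evenExtP (wHalf n) x) ^ (-(1 / (p - 1)))) (cube a ℓ) :=
        mul_nonneg (inv_nonneg.2 ENNReal.toReal_nonneg)
          (MeasureTheory.integral_nonneg fun x => Real.rpow_nonneg (hnonneg x) _)
      unfold apQuot
      calc avg (evenExtP (wHalf n)) (cube a ℓ) *
            (avg (fun x => (evenExtP (wHalf n) x) ^ (-(1 / (p - 1)))) (cube a ℓ)) ^ (p - 1)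
          ≤ (K₁ * s ^ (1 / 2 : ℝ)) * (K₂ * s ^ γ) ^ (p - 1) := by
            apply mul_le_mul hA (Real.rpow_le_rpow hBnn hB hp1.le)
              (Real.rpow_nonneg hBnn _)
              (mul_nonneg hK₁pos.le (Real.rpow_nonneg hspos.le _))
        _ = M := by
            rw [Real.mul_rpow hK₂pos.le (Real.rpow_nonneg hspos.le γ),
              ← Real.rpow_mul hspos.le γ (p - 1)]
            have hγp : γ * (p - 1) = -(1 / 2 : ℝ) := by
              rw [hγ]
              field_simp
            rw [hγp]
            have hss : s ^ (1 / 2 : ℝ) * s ^ (-(1 / 2 : ℝ)) = 1 := by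
              rw [← Real.rpow_add hspos]
              norm_num
            calc K₁ * s ^ (1 / 2 : ℝ) * (K₂ ^ (p - 1) * s ^ (-(1 / 2 : ℝ)))
                = K₁ * K₂ ^ (p - 1) * (s ^ (1 / 2 : ℝ) * s ^ (-(1 / 2 : ℝ))) := by ring
              _ = M := by rw [hss, mul_one, hM]
    unfold apConst apConstOn
    refine lt_of_le_of_lt (iSup_le fun a => iSup_le fun ℓ => iSup_le fun hc => ?_)
      (show ENNReal.ofReal M < ⊤ from ENNReal.ofReal_lt_top)
    exact ENNReal.ofReal_le_ofReal (key a ℓ hc.1)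

lemma rpow_one_sixteenth : ((1 / 16 : ℝ)) ^ (1 / 2 : ℝ) = 1 / 4 := by
  rw [show (1 / 16 : ℝ) = (1 / 4 : ℝ) ^ (2 : ℕ) by norm_num,
    ← Real.rpow_natCast (1 / 4 : ℝ) 2, ← Real.rpow_mul (by norm_num)]
  norm_num

lemma wInt_bounds_Qb (hn : 0 < n) {b : ℝ} (hb : 0 < b) :
    ENNReal.ofReal (b ^ (1 / 2 : ℝ) / 4) * ENNReal.ofReal (5 * b / 8) ^ n
        ≤ wInt (wHalf n) (cubeC (ctrQb n b) (5 * b / 8)) ∧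
    wInt (wHalf n) (cubeC (ctrQb n b) (5 * b / 8))
        ≤ ENNReal.ofReal (b ^ (1 / 2 : ℝ)) * ENNReal.ofReal (5 * b / 8) ^ n := by
  set i0 : Fin n := ⟨n - 1, by omega⟩ with hi0
  set Q := cubeC (ctrQb n b) (5 * b / 8) with hQ
  have hQmeas : MeasurableSet Q := measurableSet_cubeC _ _
  have hcoord : ∀ x ∈ Q, b / 16 ≤ x i0 ∧ x i0 ≤ 11 * b / 16 := by
    intro x hx
    have h := hx i0
    have hc : ctrQb n b i0 = 3 * b / 8 := if_pos rfl
    rw [hc] at h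
    have h2 := abs_le.1 h
    exact ⟨by linarith [h2.1], by linarith [h2.2]⟩
  have hw : ∀ x ∈ Q, wHalf n x = (x i0) ^ (1 / 2 : ℝ) := by
    intro x hx
    have hpos : 0 < x i0 := lt_of_lt_of_le (by linarith) (hcoord x hx).1
    unfold wHalf
    rw [lastC_eq hn x, if_pos]
    exact hpos
  have hreal : ∀ x ∈ Q, b ^ (1 / 2 : ℝ) / 4 ≤ wHalf n x ∧ wHalf n x ≤ b ^ (1 / 2 : ℝ) := by
    intro x hx
    obtain ⟨h1, h2⟩ := hcoord x hx
    rw [hw x hx]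
    constructor
    · have h116 : (b / 16 : ℝ) ^ (1 / 2 : ℝ) = b ^ (1 / 2 : ℝ) / 4 := by
        rw [show (b / 16 : ℝ) = b * (1 / 16) by ring, Real.mul_rpow hb.le (by norm_num),
          rpow_one_sixteenth]
        ring
      rw [← h116]
      exact Real.rpow_le_rpow (by linarith) h1 (by norm_num)
    · exact Real.rpow_le_rpow (by linarith) (by linarith) (by norm_num)
  constructor
  · calc ENNReal.ofReal (b ^ (1 / 2 : ℝ) / 4) * ENNReal.ofReal (5 * b / 8) ^ n
        = ENNReal.ofReal (b ^ (1 / 2 : ℝ) / 4) * volume Q := by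
          rw [hQ, volume_cubeC _ (by linarith : (0:ℝ) ≤ 5 * b / 8)]
      _ = ∫⁻ _x in Q, ENNReal.ofReal (b ^ (1 / 2 : ℝ) / 4) := by
          rw [MeasureTheory.setLIntegral_const]
      _ ≤ ∫⁻ x in Q, ENNReal.ofReal (wHalf n x) :=
          MeasureTheory.setLIntegral_mono' hQmeas fun x hx =>
            ENNReal.ofReal_le_ofReal (hreal x hx).1
  · calc wInt (wHalf n) Q
        = ∫⁻ x in Q, ENNReal.ofReal (wHalf n x) := rfl
      _ ≤ ∫⁻ _x in Q, ENNReal.ofReal (b ^ (1 / 2 : ℝ)) :=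
          MeasureTheory.setLIntegral_mono' hQmeas fun x hx =>
            ENNReal.ofReal_le_ofReal (hreal x hx).2
      _ = ENNReal.ofReal (b ^ (1 / 2 : ℝ)) * volume Q := by
          rw [MeasureTheory.setLIntegral_const]
      _ = ENNReal.ofReal (b ^ (1 / 2 : ℝ)) * ENNReal.ofReal (5 * b / 8) ^ n := by
          rw [hQ, volume_cubeC _ (by linarith : (0:ℝ) ≤ 5 * b / 8)]

lemma wInt_bounds_2Qb (hn : 0 < n) {b : ℝ} (hb : 0 < b) (hb1 : b ≤ 1) :
    ENNReal.ofReal (b / 4) * ENNReal.ofReal (2 * (5 * b / 8)) ^ (n - 1)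
        ≤ wInt (wHalf n) (cubeC (ctrQb n b) (2 * (5 * b / 8))) ∧
    wInt (wHalf n) (cubeC (ctrQb n b) (2 * (5 * b / 8)))
        ≤ ENNReal.ofReal (2 * (5 * b / 8)) ^ n := by
  classical
  set i0 : Fin n := ⟨n - 1, by omega⟩ with hi0
  have hival : ((⟨n - 1, by omega⟩ : Fin n) : ℕ) = n - 1 := rfl
  set ℓ₂ : ℝ := 2 * (5 * b / 8) with hℓ₂
  have hℓ₂pos : 0 < ℓ₂ := by rw [hℓ₂]; linarith
  set Q := cubeC (ctrQb n b) ℓ₂ with hQ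
  have hival0 : ((i0 : Fin n) : ℕ) = n - 1 := hival
  have hQmeas : MeasurableSet Q := measurableSet_cubeC _ _
  constructor
  · -- lower bound via the subcube S
    set S : Set (Rn n) := Set.pi univ fun i =>
      if (i : ℕ) = n - 1 then Icc (-(b / 4)) 0
      else Icc (ctrQb n b i - ℓ₂ / 2) (ctrQb n b i + ℓ₂ / 2) with hS
    have hSmeas : MeasurableSet S := by
      rw [hS]
      exact MeasurableSet.univ_pi fun i => by split <;> exact measurableSet_Icc
    have hSsub : S ⊆ Q := by
      rw [hS, hQ, cubeC_eq_pi]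
      apply Set.pi_mono
      intro i _
      split
      · rename_i hi
        have hci : ctrQb n b i = 3 * b / 8 := if_pos hi
        rw [hci]
        apply Set.Icc_subset_Icc
        · rw [hℓ₂]; linarith
        · rw [hℓ₂]; linarith
      · exact subset_rfl
    have hwS : ∀ x ∈ S, ENNReal.ofReal (wHalf n x) = 1 := by
      intro x hx
      have hxi0 : x i0 ∈ Icc (-(b / 4)) (0:ℝ) := by
        have h := hx i0 (mem_univ i0)
        simpa [hival0] using h
      have hle : lastC x ≤ 0 := by
        rw [lastC_eq hn x]
        exact hxi0.2
      unfold wHalf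
      rw [if_neg (by rw [lastC_eq hn x] at hle ⊢; exact not_lt.2 hle), ENNReal.ofReal_one]
    have hvolS : volume S = ENNReal.ofReal (b / 4) * ENNReal.ofReal ℓ₂ ^ (n - 1) := by
      rw [hS, volume_pi_pi]
      have hfac : ∀ i : Fin n,
          volume (if (i : ℕ) = n - 1 then Icc (-(b / 4)) (0:ℝ)
            else Icc (ctrQb n b i - ℓ₂ / 2) (ctrQb n b i + ℓ₂ / 2))
          = if i = i0 then ENNReal.ofReal (b / 4) else ENNReal.ofReal ℓ₂ := by
        intro i
        by_cases hi : i = i0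
        · have hic : ((i : Fin n) : ℕ) = n - 1 := by rw [hi]
          rw [if_pos hic, if_pos hi, Real.volume_Icc]
          congr 1
          ring
        · have hi' : ((i : Fin n) : ℕ) ≠ n - 1 := by
            intro hcon
            exact hi (Fin.ext (by rw [hcon, hi0]))
          rw [if_neg hi', if_neg hi, Real.volume_Icc]
          congr 1
          ring
      rw [Finset.prod_congr rfl fun i _ => hfac i,
        ← Finset.mul_prod_erase Finset.univ _ (Finset.mem_univ i0), if_pos rfl]
      congr 1
      rw [Finset.prod_congr rfl (fun i hi => if_neg (Finset.ne_of_mem_erase hi)),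
        Finset.prod_const, Finset.card_erase_of_mem (Finset.mem_univ i0), Finset.card_univ,
        Fintype.card_fin]
    calc ENNReal.ofReal (b / 4) * ENNReal.ofReal ℓ₂ ^ (n - 1)
        = volume S := hvolS.symm
      _ = ∫⁻ _x in S, 1 := (MeasureTheory.setLIntegral_one S).symm
      _ = ∫⁻ x in S, ENNReal.ofReal (wHalf n x) :=
          (MeasureTheory.setLIntegral_congr_fun hSmeas
            (fun x hx => hwS x hx)).symm
      _ ≤ ∫⁻ x in Q, ENNReal.ofReal (wHalf n x) :=
          MeasureTheory.lintegral_mono_set hSsub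
  · have hup : ∀ x ∈ Q, ENNReal.ofReal (wHalf n x) ≤ 1 := by
      intro x hx
      have hxb : x i0 ≤ b := by
        have h := hx i0
        have hc : ctrQb n b i0 = 3 * b / 8 := if_pos rfl
        rw [hc] at h
        have h2 := abs_le.1 h
        have h3 := h2.2
        rw [hℓ₂] at h3
        linarith
      have hwx : wHalf n x ≤ 1 := by
        unfold wHalf
        rw [lastC_eq hn x]
        split
        · rename_i hpos
          exact Real.rpow_le_one hpos.le (le_trans hxb hb1) (by norm_num)
        · exact le_refl 1
      calc ENNReal.ofReal (wHalf n x) ≤ ENNReal.ofReal 1 := ENNReal.ofReal_le_ofReal hwx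
        _ = 1 := ENNReal.ofReal_one
    calc wInt (wHalf n) Q = ∫⁻ x in Q, ENNReal.ofReal (wHalf n x) := rfl
      _ ≤ ∫⁻ _x in Q, 1 := MeasureTheory.setLIntegral_mono' hQmeas hup
      _ = volume Q := MeasureTheory.setLIntegral_one Q
      _ = ENNReal.ofReal ℓ₂ ^ n := volume_cubeC _ hℓ₂pos.le

end AuxNondoubling2
/-- for `p > 3/2`, the weight `w = x_n^{1/2} 1_{x_n>0} + 1_{x_n<0}` belongs to
`A^p_{Δ_N}(ℝ^n)` but is non-doubling: with `Q_b = [-5b/16, 5b/16]^{n-1} × [b/16, 11b/16]`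
one has `2Q_b = [-5b/8, 5b/8]^{n-1} × [-b/4, b]`, `w(Q_b) ≍ b^{n+1/2}` and
`w(2Q_b) ≍ b^n`, and no doubling constant exists. -/
theorem ap_deltaN_nondoubling (n : ℕ) (hn : 1 ≤ n) (p : ℝ) (hp : 3 / 2 < p) :
    IsApDeltaN p (wHalf n) ∧
    (∀ b : ℝ, 0 < b →
      cubeC (ctrQb n b) (5 * b / 8) =
        {x : Rn n | ∀ i : Fin n,
          if (i : ℕ) = n - 1 then b / 16 ≤ x i ∧ x i ≤ 11 * b / 16 else |x i| ≤ 5 * b / 16} ∧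
      cubeC (ctrQb n b) (2 * (5 * b / 8)) =
        {x : Rn n | ∀ i : Fin n,
          if (i : ℕ) = n - 1 then -b / 4 ≤ x i ∧ x i ≤ b else |x i| ≤ 5 * b / 8}) ∧
    (∃ c C : ℝ, 0 < c ∧ 0 < C ∧ ∀ b : ℝ, 0 < b → b < 1 / 9 →
      (c * b ^ ((n : ℝ) + 1 / 2) ≤ (wInt (wHalf n) (cubeC (ctrQb n b) (5 * b / 8))).toReal ∧
        (wInt (wHalf n) (cubeC (ctrQb n b) (5 * b / 8))).toReal ≤ C * b ^ ((n : ℝ) + 1 / 2)) ∧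
      (c * b ^ (n : ℝ) ≤ (wInt (wHalf n) (cubeC (ctrQb n b) (2 * (5 * b / 8)))).toReal ∧
        (wInt (wHalf n) (cubeC (ctrQb n b) (2 * (5 * b / 8)))).toReal ≤ C * b ^ (n : ℝ))) ∧
    ¬ ∃ C₀ : ℝ, ∀ (c : Rn n) (ℓ : ℝ), 0 < ℓ →
        (wInt (wHalf n) (cubeC c (2 * ℓ))).toReal ≤ C₀ * (wInt (wHalf n) (cubeC c ℓ)).toReal := by
  have hn0 : 0 < n := hn
  have hfinmul : ∀ (u v : ℝ) (m : ℕ), ENNReal.ofReal u * ENNReal.ofReal v ^ m ≠ ⊤ :=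
    fun u v m => (ENNReal.mul_lt_top ENNReal.ofReal_lt_top
      (ENNReal.pow_lt_top ENNReal.ofReal_lt_top)).ne
  have hfinpow : ∀ (v : ℝ) (m : ℕ), (ENNReal.ofReal v) ^ m ≠ ⊤ :=
    fun v m => (ENNReal.pow_lt_top ENNReal.ofReal_lt_top).ne
  -- reusable real bounds for the two weighted measures of the cubes
  have hQbounds : ∀ b : ℝ, 0 < b →
      b ^ (1/2:ℝ) / 4 * (5*b/8) ^ n ≤ (wInt (wHalf n) (cubeC (ctrQb n b) (5 * b / 8))).toReal ∧
      (wInt (wHalf n) (cubeC (ctrQb n b) (5 * b / 8))).toReal ≤ b ^ (1/2:ℝ) * (5*b/8) ^ n := by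
    intro b hb
    obtain ⟨hL1, hU1⟩ := wInt_bounds_Qb hn0 hb
    have hfin : wInt (wHalf n) (cubeC (ctrQb n b) (5 * b / 8)) ≠ ⊤ :=
      ne_top_of_le_ne_top (hfinmul _ _ _) hU1
    have hb12 : (0:ℝ) < b ^ (1/2 : ℝ) := Real.rpow_pos_of_pos hb _
    constructor
    · have h := ENNReal.toReal_mono hfin hL1
      rwa [ENNReal.toReal_mul, ENNReal.toReal_pow, ENNReal.toReal_ofReal (by positivity),
        ENNReal.toReal_ofReal (by linarith)] at h
    · have h := ENNReal.toReal_mono (hfinmul _ _ _) hU1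
      rwa [ENNReal.toReal_mul, ENNReal.toReal_pow, ENNReal.toReal_ofReal (by positivity),
        ENNReal.toReal_ofReal (by linarith)] at h
  have h2Qbounds : ∀ b : ℝ, 0 < b → b ≤ 1 →
      b / 4 * (2*(5*b/8)) ^ (n-1)
        ≤ (wInt (wHalf n) (cubeC (ctrQb n b) (2 * (5 * b / 8)))).toReal ∧
      (wInt (wHalf n) (cubeC (ctrQb n b) (2 * (5 * b / 8)))).toReal ≤ (2*(5*b/8)) ^ n := by
    intro b hb hb1
    obtain ⟨hL2, hU2⟩ := wInt_bounds_2Qb hn0 hb hb1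
    have hfin : wInt (wHalf n) (cubeC (ctrQb n b) (2 * (5 * b / 8))) ≠ ⊤ :=
      ne_top_of_le_ne_top (hfinpow _ _) hU2
    constructor
    · have h := ENNReal.toReal_mono hfin hL2
      rwa [ENNReal.toReal_mul, ENNReal.toReal_pow, ENNReal.toReal_ofReal (by linarith),
        ENNReal.toReal_ofReal (by linarith)] at h
    · have h := ENNReal.toReal_mono (hfinpow _ _) hU2
      rwa [ENNReal.toReal_pow, ENNReal.toReal_ofReal (by linarith)] at h
  refine ⟨⟨isAp_evenExtP hn hp, ?_⟩, ?_, ?_, ?_⟩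
  · rw [evenExtM_wHalf hn0]
    exact isAp_const_one hp
  · -- Part 2: identification of the cubes
    intro b _hb
    constructor
    · ext x
      simp only [cubeC, ctrQb, mem_setOf_eq]
      refine forall_congr' fun i => ?_
      by_cases hi : (i : ℕ) = n - 1
      · rw [if_pos hi, if_pos hi, abs_le]
        constructor <;> rintro ⟨h1, h2⟩ <;> exact ⟨by linarith, by linarith⟩
      · rw [if_neg hi, if_neg hi, sub_zero, show 5 * b / 8 / 2 = 5 * b / 16 by ring]
    · ext x
      simp only [cubeC, ctrQb, mem_setOf_eq]
      refine forall_congr' fun i => ?_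
      by_cases hi : (i : ℕ) = n - 1
      · rw [if_pos hi, if_pos hi, abs_le]
        constructor <;> rintro ⟨h1, h2⟩ <;> exact ⟨by linarith, by linarith⟩
      · rw [if_neg hi, if_neg hi, sub_zero, show 2 * (5 * b / 8) / 2 = 5 * b / 8 by ring]
  · -- Part 3: two-sided bounds
    refine ⟨(5/8 : ℝ) ^ n / 4, (5/4 : ℝ) ^ n, by positivity, by positivity, ?_⟩
    intro b hb hb9
    obtain ⟨hQL, hQU⟩ := hQbounds b hb
    obtain ⟨h2L, h2U⟩ := h2Qbounds b hb (by linarith)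
    have hb12 : (0:ℝ) < b ^ (1/2 : ℝ) := Real.rpow_pos_of_pos hb _
    have hrw : b ^ ((n:ℝ) + 1/2) = b ^ n * b ^ (1/2:ℝ) := by
      rw [Real.rpow_add hb, Real.rpow_natCast]
    have hrwn : b ^ ((n:ℝ)) = b ^ n := Real.rpow_natCast b n
    have h58 : (5*b/8 : ℝ) ^ n = (5/8:ℝ) ^ n * b ^ n := by
      rw [show (5*b/8 : ℝ) = 5/8 * b by ring, mul_pow]
    have hbn : (0:ℝ) < b ^ n := pow_pos hb n
    refine ⟨⟨?_, ?_⟩, ?_, ?_⟩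
    · calc (5/8:ℝ) ^ n / 4 * b ^ ((n:ℝ) + 1/2)
          = b ^ (1/2:ℝ) / 4 * (5*b/8) ^ n := by rw [hrw, h58]; ring
        _ ≤ _ := hQL
    · refine le_trans hQU ?_
      rw [hrw, h58]
      have h3 : (5/8:ℝ) ^ n ≤ (5/4:ℝ) ^ n := pow_le_pow_left₀ (by norm_num) (by norm_num) n
      calc b ^ (1/2:ℝ) * ((5/8:ℝ) ^ n * b ^ n)
          ≤ b ^ (1/2:ℝ) * ((5/4:ℝ) ^ n * b ^ n) :=
            mul_le_mul_of_nonneg_left (mul_le_mul_of_nonneg_right h3 hbn.le) hb12.le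
        _ = (5/4:ℝ) ^ n * (b ^ n * b ^ (1/2:ℝ)) := by ring
    · refine le_trans ?_ h2L
      rw [hrwn]
      have hbn1 : (b:ℝ) ^ (n-1) ≤ (2*(5*b/8)) ^ (n-1) :=
        pow_le_pow_left₀ hb.le (by linarith) _
      have h581 : (5/8:ℝ) ^ n / 4 * b ^ n ≤ 1/4 * b ^ n := by
        have h1 : (5/8:ℝ) ^ n ≤ 1 := pow_le_one₀ (by norm_num) (by norm_num)
        nlinarith
      have hsplit : (1/4:ℝ) * b ^ n = b / 4 * b ^ (n-1) := by
        rw [show (b:ℝ) ^ n = b * b ^ (n-1) by rw [← pow_succ']; congr 1; omega]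
        ring
      calc (5/8:ℝ) ^ n / 4 * b ^ n ≤ 1/4 * b ^ n := h581
        _ = b / 4 * b ^ (n-1) := hsplit
        _ ≤ b / 4 * (2*(5*b/8)) ^ (n-1) :=
            mul_le_mul_of_nonneg_left hbn1 (by linarith)
    · refine le_trans h2U ?_
      rw [hrwn, show (2*(5*b/8) : ℝ) = 5/4 * b by ring, mul_pow]
  · -- Part 4: non-doubling
    rintro ⟨C₀, hC₀⟩
    set D : ℝ := max C₀ 1 with hD
    have hDpos : (0:ℝ) < D := lt_of_lt_of_le one_pos (le_max_right _ _)
    have hDC : C₀ ≤ D := le_max_left _ _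
    set b : ℝ := min (1/18) ((1/(8*D)) ^ 2) with hbdef
    have hb : 0 < b := lt_min (by norm_num) (by positivity)
    have hb1 : b ≤ 1 := le_trans (min_le_left _ _) (by norm_num)
    obtain ⟨hQL, hQU⟩ := hQbounds b hb
    obtain ⟨h2L, h2U⟩ := h2Qbounds b hb hb1
    have hb12 : (0:ℝ) < b ^ (1/2 : ℝ) := Real.rpow_pos_of_pos hb _
    have hbn : (0:ℝ) < b ^ n := pow_pos hb n
    -- W1.toReal ≤ b^{1/2} b^n
    have hW1 : (wInt (wHalf n) (cubeC (ctrQb n b) (5 * b / 8))).toReal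
        ≤ b ^ (1/2:ℝ) * b ^ n := by
      refine le_trans hQU ?_
      have h1 : (5*b/8 : ℝ) ^ n ≤ b ^ n := pow_le_pow_left₀ (by linarith) (by linarith) n
      exact mul_le_mul_of_nonneg_left h1 hb12.le
    -- W2.toReal ≥ b^n / 4
    have hW2 : b ^ n / 4 ≤ (wInt (wHalf n) (cubeC (ctrQb n b) (2 * (5 * b / 8)))).toReal := by
      refine le_trans ?_ h2L
      have hbn1 : (b:ℝ) ^ (n-1) ≤ (2*(5*b/8)) ^ (n-1) :=
        pow_le_pow_left₀ hb.le (by linarith) _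
      calc b ^ n / 4 = b / 4 * b ^ (n-1) := by
            rw [show (b:ℝ) ^ n = b * b ^ (n-1) by rw [← pow_succ']; congr 1; omega]
            ring
        _ ≤ b / 4 * (2*(5*b/8)) ^ (n-1) := mul_le_mul_of_nonneg_left hbn1 (by linarith)
    have hdouble := hC₀ (ctrQb n b) (5 * b / 8) (by linarith)
    have hW1nn : 0 ≤ (wInt (wHalf n) (cubeC (ctrQb n b) (5 * b / 8))).toReal :=
      ENNReal.toReal_nonneg
    have hkey : b ^ n / 4 ≤ D * (b ^ (1/2:ℝ) * b ^ n) := by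
      calc b ^ n / 4 ≤ (wInt (wHalf n) (cubeC (ctrQb n b) (2 * (5 * b / 8)))).toReal := hW2
        _ ≤ C₀ * (wInt (wHalf n) (cubeC (ctrQb n b) (5 * b / 8))).toReal := hdouble
        _ ≤ D * (wInt (wHalf n) (cubeC (ctrQb n b) (5 * b / 8))).toReal :=
            mul_le_mul_of_nonneg_right hDC hW1nn
        _ ≤ D * (b ^ (1/2:ℝ) * b ^ n) := mul_le_mul_of_nonneg_left hW1 hDpos.le
    have hquot : (1:ℝ)/4 ≤ D * b ^ (1/2:ℝ) := by
      by_contra hcon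
      push_neg at hcon
      nlinarith
    have hroot : b ^ (1/2:ℝ) ≤ 1/(8*D) := by
      have h1 : b ≤ (1/(8*D)) ^ 2 := min_le_right _ _
      calc b ^ (1/2:ℝ) ≤ ((1/(8*D)) ^ 2) ^ (1/2:ℝ) :=
            Real.rpow_le_rpow hb.le h1 (by norm_num)
        _ = 1/(8*D) := by
            rw [← Real.rpow_natCast (1/(8*D)) 2, ← Real.rpow_mul (by positivity)]
            norm_num
    have hDval : D * (1/(8*D)) = 1/8 := by field_simp
    nlinarith [mul_le_mul_of_nonneg_left hroot hDpos.le]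

end Paper
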